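/- For α ∈ (0,1)∪(1,∞) and a probability distribution p on a finite set X, the maximum over all probability distributions r on X of the expected α-score E^p[g_α(X,r)], where g_α(x,r) = (α/(α−1)) r(x)^{1−1/α}, equals (α/(α−1)) · (Σ_x p(x)^α)^{1/α}, and the maximum is attained at r = p^(α), the α-tilted distribution of p. -/

import Mathlib

open BigOperators

/-- `p` is a probability distribution on the finite set `X`. -/
def IsDist {X : Type*} [Fintype X] (p : X → ℝ) : Prop :=
  (∀ x, 0 ≤ p x) ∧ ∑ x, p x = 1

/-- The α-tilted (escort) distribution of `p`. -/
noncomputable def tilt {X : Type*} [Fintype X] (p : X → ℝ) (a : ℝ) : X → ℝ :=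
  fun x => p x ^ a / ∑ x', p x' ^ a

section aux

variable {X : Type*} [Fintype X] [Nonempty X]

lemma sum_rpow_pos {p : X → ℝ} (hp : IsDist p) {α : ℝ} (hα0 : 0 < α) :
    0 < ∑ x, p x ^ α := by
  obtain ⟨x0, hx0⟩ : ∃ x, 0 < p x := by
    by_contra h
    push_neg at h
    have : ∀ x, p x = 0 := fun x => le_antisymm (h x) (hp.1 x)
    have h2 := hp.2
    simp only [this, Finset.sum_const_zero] at h2
    exact one_ne_zero h2.symm
  have : 0 < p x0 ^ α := Real.rpow_pos_of_pos hx0 α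
  refine lt_of_lt_of_le this ?_
  exact Finset.single_le_sum (fun x _ => Real.rpow_nonneg (hp.1 x) α) (Finset.mem_univ x0)

end aux

/-- The maximal expected α-score `E^p[g_α(X,r)]`, with `g_α(x,r) = (α/(α-1)) r(x)^{1-1/α}`,
over distributions `r` (with full support when `α < 1`) equals
`(α/(α-1)) (Σ_x p(x)^α)^{1/α}`, attained at the α-tilted distribution `r = p^(α)`. -/
theorem max_expected_alpha_score {X : Type*} [Fintype X] [Nonempty X]
    (α : ℝ) (hα0 : 0 < α) (hα1 : α ≠ 1)
    (p : X → ℝ) (hp : IsDist p) (hps : α < 1 → ∀ x, 0 < p x) :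
    IsGreatest {v : ℝ | ∃ r : X → ℝ, IsDist r ∧ (α < 1 → ∀ x, 0 < r x) ∧
        v = ∑ x, p x * (α / (α - 1) * r x ^ (1 - 1 / α))}
      (α / (α - 1) * (∑ x, p x ^ α) ^ (1 / α)) ∧
    ∑ x, p x * (α / (α - 1) * tilt p α x ^ (1 - 1 / α))
      = α / (α - 1) * (∑ x, p x ^ α) ^ (1 / α) := by
  have hαne : α ≠ 0 := ne_of_gt hα0
  set S : ℝ := ∑ x, p x ^ α with hS
  have hSpos : 0 < S := sum_rpow_pos hp hα0
  -- the value at the tilted distribution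
  have key : ∑ x, p x * (α / (α - 1) * tilt p α x ^ (1 - 1 / α))
      = α / (α - 1) * S ^ (1 / α) := by
    have hterm : ∀ x, p x * (α / (α - 1) * tilt p α x ^ (1 - 1 / α))
        = α / (α - 1) * (p x ^ α / S ^ (1 - 1 / α)) := by
      intro x
      have hpx : 0 ≤ p x := hp.1 x
      have h1 : tilt p α x ^ (1 - 1 / α)
          = p x ^ (α - 1) / S ^ (1 - 1 / α) := by
        rw [tilt, Real.div_rpow (Real.rpow_nonneg hpx α) hSpos.le,
          ← Real.rpow_mul hpx]
        congr 1
        field_simp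
      have h2 : p x * p x ^ (α - 1) = p x ^ α := by
        rcases eq_or_lt_of_le hpx with h | h
        · rw [← h, Real.zero_rpow (sub_ne_zero.mpr hα1), Real.zero_rpow hαne, mul_zero]
        · nth_rewrite 1 [← Real.rpow_one (p x)]
          rw [← Real.rpow_add h]
          norm_num
      rw [h1, ← h2]
      ring
    rw [Finset.sum_congr rfl fun x _ => hterm x, ← Finset.mul_sum, ← Finset.sum_div]
    congr 1
    rw [← hS, div_eq_iff (ne_of_gt (Real.rpow_pos_of_pos hSpos _)),
      ← Real.rpow_add hSpos, show 1 / α + (1 - 1 / α) = 1 by ring, Real.rpow_one]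
  refine ⟨⟨⟨tilt p α, ?_, ?_, key.symm⟩, ?_⟩, key⟩
  · constructor
    · intro x
      exact div_nonneg (Real.rpow_nonneg (hp.1 x) α) hSpos.le
    · simp only [tilt]
      rw [← Finset.sum_div, div_self (ne_of_gt hSpos)]
  · intro hlt x
    exact div_pos (Real.rpow_pos_of_pos (hps hlt x) α) hSpos
  · rintro v ⟨r, hr, hrpos, rfl⟩
    have hrn : ∀ x, 0 ≤ r x := hr.1
    rcases lt_or_gt_of_ne hα1 with hlt | hgt
    · -- α < 1 : coefficient negative, reverse Hölder
      have hppos := hps hlt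
      have hrp := hrpos hlt
      set T : ℝ := ∑ x, p x * r x ^ (1 - 1 / α) with hT
      have hTpos : 0 < T :=
        Finset.sum_pos (fun x _ => mul_pos (hppos x) (Real.rpow_pos_of_pos (hrp x) _))
          Finset.univ_nonempty
      have hconj : (1 / α).HolderConjugate (1 / (1 - α)) := by
        rw [Real.holderConjugate_iff]; constructor
        · rw [lt_div_iff₀ hα0]; linarith
        · simp only [one_div, inv_inv]; ring
      have hFG : ∀ x, ((p x * r x ^ (1 - 1 / α)) ^ α) * (r x ^ (1 - α)) = p x ^ α := by
        intro x
        rw [Real.mul_rpow (hppos x).le (Real.rpow_nonneg (hrn x) _),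
          ← Real.rpow_mul (hrn x), mul_assoc, ← Real.rpow_add (hrp x),
          show (1 - 1 / α) * α + (1 - α) = 0 by field_simp; ring, Real.rpow_zero, mul_one]
      have hFs : ∀ x, (((p x * r x ^ (1 - 1 / α)) ^ α) ^ (1 / α)) = p x * r x ^ (1 - 1 / α) := by
        intro x
        rw [one_div, Real.rpow_rpow_inv
          (mul_nonneg (hppos x).le (Real.rpow_nonneg (hrn x) _)) hαne]
      have hGs : ∀ x, ((r x ^ (1 - α)) ^ (1 / (1 - α))) = r x := by
        intro x
        rw [one_div, Real.rpow_rpow_inv (hrn x) (by intro h; apply hα1; linarith)]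
      have hhold := Real.inner_le_Lp_mul_Lq_of_nonneg (s := Finset.univ) hconj
        (f := fun x => (p x * r x ^ (1 - 1 / α)) ^ α) (g := fun x => r x ^ (1 - α))
        (fun x _ => Real.rpow_nonneg (mul_nonneg (hppos x).le (Real.rpow_nonneg (hrn x) _)) _)
        (fun x _ => Real.rpow_nonneg (hrn x) _)
      rw [Finset.sum_congr rfl fun x _ => hFG x,
        Finset.sum_congr rfl fun x _ => hFs x,
        Finset.sum_congr rfl fun x _ => hGs x, one_div_one_div, one_div_one_div,
        hr.2, Real.one_rpow, mul_one, ← hT, ← hS] at hhold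
      have h2 : S ^ (1 / α) ≤ T := by
        calc S ^ (1 / α) ≤ (T ^ α) ^ (1 / α) :=
              Real.rpow_le_rpow hSpos.le hhold (by positivity)
          _ = T := by
              rw [← Real.rpow_mul hTpos.le, mul_one_div, div_self hαne, Real.rpow_one]
      have hL : ∑ x, p x * (α / (α - 1) * r x ^ (1 - 1 / α)) = α / (α - 1) * T := by
        rw [hT, Finset.mul_sum]
        exact Finset.sum_congr rfl fun x _ => by ring
      rw [hL]
      have hc : α / (α - 1) ≤ 0 := le_of_lt (div_neg_of_pos_of_neg hα0 (by linarith))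
      exact mul_le_mul_of_nonpos_left h2 hc
    · -- α > 1 : standard Hölder
      have hconj : α.HolderConjugate (α / (α - 1)) := by
        rw [Real.holderConjugate_iff]; constructor
        · exact hgt
        · rw [inv_div]
          field_simp
          ring
      have hg : ∀ x, (r x ^ (1 - 1 / α)) ^ (α / (α - 1)) = r x := by
        intro x
        rw [← Real.rpow_mul (hrn x),
          show (1 - 1 / α) * (α / (α - 1)) = 1 by
            have h1 : α - 1 ≠ 0 := sub_ne_zero.mpr (ne_of_gt hgt)
            field_simp, Real.rpow_one]
      have hhold := Real.inner_le_Lp_mul_Lq_of_nonneg (s := Finset.univ) hconj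
        (f := p) (g := fun x => r x ^ (1 - 1 / α))
        (fun x _ => hp.1 x) (fun x _ => Real.rpow_nonneg (hrn x) _)
      rw [Finset.sum_congr rfl fun x _ => hg x, hr.2, Real.one_rpow, mul_one, ← hS] at hhold
      have hL : ∑ x, p x * (α / (α - 1) * r x ^ (1 - 1 / α))
          = α / (α - 1) * ∑ x, p x * r x ^ (1 - 1 / α) := by
        rw [Finset.mul_sum]
        exact Finset.sum_congr rfl fun x _ => by ring
      rw [hL]
      exact mul_le_mul_of_nonneg_left hhold (le_of_lt (div_pos hα0 (by linarith)))
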